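/- Let σ ∈ (0,1/2). For |ξ| ≥ 1 and t ≥ 0, the high-frequency symbols K̂₁^±(t,ξ) = ±e^{λ±(|ξ|)t}/(λ₊(|ξ|) - λ₋(|ξ|)) (where λ± are as in the complex case, with real part -|ξ|^{2σ}/2 and |λ₊ - λ₋| = |ξ|^{2σ}√(4|ξ|^{2(1-2σ)}-1)) satisfy ⟨ξ⟩ |K̂₁^±(t,ξ)| ≤ C e^{-t/2} for a constant C depending only on σ and n. -/

import Mathlib

/-- high-frequency bound ⟨ξ⟩|K̂₁^±(t,ξ)| ≤ C e^{-t/2} for |ξ| ≥ 1,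
where K̂₁^± = ±e^{λ±t}/(λ₊ - λ₋), λ± = (ρ^{2σ}/2)(-1 ± i√(4ρ^{2(1-2σ)}-1)),
λ₊ - λ₋ = ρ^{2σ} i √(4ρ^{2(1-2σ)}-1), ρ = |ξ|. -/
theorem stmt_11 (n : ℕ) (σ : ℝ) (hσ : σ ∈ Set.Ioo (0:ℝ) (1/2)) :
    ∃ C : ℝ, 0 < C ∧ ∀ t : ℝ, 0 ≤ t → ∀ ρ : ℝ, 1 ≤ ρ →
      Real.sqrt (1 + ρ^2) *
        ‖Complex.exp (((ρ ^ (2*σ) / 2 : ℝ) : ℂ) *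
            (-1 + Complex.I * ((Real.sqrt (4*ρ ^ (2*(1-2*σ)) - 1) : ℝ) : ℂ)) * (t:ℂ)) /
          (((ρ ^ (2*σ) : ℝ) : ℂ) * Complex.I *
            ((Real.sqrt (4*ρ ^ (2*(1-2*σ)) - 1) : ℝ) : ℂ))‖ ≤ C * Real.exp (-t/2) ∧
      Real.sqrt (1 + ρ^2) *
        ‖-Complex.exp (((ρ ^ (2*σ) / 2 : ℝ) : ℂ) *
            (-1 - Complex.I * ((Real.sqrt (4*ρ ^ (2*(1-2*σ)) - 1) : ℝ) : ℂ)) * (t:ℂ)) /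
          (((ρ ^ (2*σ) : ℝ) : ℂ) * Complex.I *
            ((Real.sqrt (4*ρ ^ (2*(1-2*σ)) - 1) : ℝ) : ℂ))‖ ≤ C * Real.exp (-t/2) := by
  obtain ⟨hσ0, hσ2⟩ := hσ
  refine ⟨2, by norm_num, fun t ht ρ hρ => ?_⟩
  have hρ0 : (0:ℝ) < ρ := lt_of_lt_of_le one_pos hρ
  set a : ℝ := ρ ^ (2*σ) with ha
  set b : ℝ := ρ ^ (2*(1-2*σ)) with hb
  set s : ℝ := Real.sqrt (4*b - 1) with hs
  have ha1 : 1 ≤ a := Real.one_le_rpow hρ (by linarith)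
  have hb1 : 1 ≤ b := Real.one_le_rpow hρ (by nlinarith)
  have ha0 : 0 < a := lt_of_lt_of_le one_pos ha1
  have h4b : (3:ℝ) ≤ 4*b - 1 := by linarith
  have hs2 : s^2 = 4*b - 1 := Real.sq_sqrt (by linarith)
  have hs0 : 0 < s := Real.sqrt_pos.mpr (by linarith)
  -- a*a*b = ρ^2
  have hab : a * a * b = ρ^2 := by
    rw [ha, hb, ← Real.rpow_add hρ0, ← Real.rpow_add hρ0,
      show 2*σ + 2*σ + 2*(1-2*σ) = (2:ℝ) by ring,
      show (2:ℝ) = ((2:ℕ):ℝ) by norm_num, Real.rpow_natCast]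
  have haa : a * a ≤ ρ^2 := by
    have h : a * a = ρ ^ (4*σ) := by
      rw [ha, ← Real.rpow_add hρ0]; ring_nf
    rw [h, show ρ^2 = ρ^((2:ℕ):ℝ) by rw [Real.rpow_natCast]]
    exact Real.rpow_le_rpow_of_exponent_le hρ (by norm_num; linarith)
  -- denominator lower bound
  have hkey : Real.sqrt 3 * ρ ≤ a * s := by
    have h1 : (Real.sqrt 3 * ρ)^2 ≤ (a*s)^2 := by
      have h2 : (a*s)^2 = a*a*(4*b-1) := by rw [mul_pow, hs2]; ring
      rw [h2, mul_pow, Real.sq_sqrt (by norm_num : (0:ℝ) ≤ 3)]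
      nlinarith
    calc Real.sqrt 3 * ρ = Real.sqrt ((Real.sqrt 3 * ρ)^2) :=
          (Real.sqrt_sq (by positivity)).symm
      _ ≤ Real.sqrt ((a*s)^2) := Real.sqrt_le_sqrt h1
      _ = a * s := Real.sqrt_sq (by positivity)
  -- ⟨ξ⟩ upper bound
  have hcoer : Real.sqrt (1 + ρ^2) ≤ Real.sqrt 2 * ρ := by
    calc Real.sqrt (1 + ρ^2) ≤ Real.sqrt (2 * ρ^2) :=
          Real.sqrt_le_sqrt (by nlinarith)
      _ = Real.sqrt 2 * ρ := by
          rw [Real.sqrt_mul (by norm_num), Real.sqrt_sq hρ0.le]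
  -- denominator norm
  have hden : ‖((a:ℝ):ℂ) * Complex.I * ((s:ℝ):ℂ)‖ = a * s := by
    simp [Complex.norm_real, abs_of_pos ha0, abs_of_pos hs0]
  -- exponential norms
  have hexp1 : ‖Complex.exp (((a / 2 : ℝ) : ℂ) * (-1 + Complex.I * ((s:ℝ):ℂ)) * (t:ℂ))‖
      = Real.exp (-(a/2)*t) := by
    rw [Complex.norm_exp]
    congr 1
    simp [Complex.mul_re, Complex.mul_im, Complex.add_re, Complex.add_im]
  have hexp2 : ‖Complex.exp (((a / 2 : ℝ) : ℂ) * (-1 - Complex.I * ((s:ℝ):ℂ)) * (t:ℂ))‖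
      = Real.exp (-(a/2)*t) := by
    rw [Complex.norm_exp]
    congr 1
    simp [Complex.mul_re, Complex.mul_im, Complex.sub_re, Complex.sub_im]
  have hexple : Real.exp (-(a/2)*t) ≤ Real.exp (-t/2) :=
    Real.exp_le_exp.mpr (by nlinarith)
  -- the common bound
  have main : Real.sqrt (1 + ρ^2) * (Real.exp (-(a/2)*t) / (a*s)) ≤ 2 * Real.exp (-t/2) := by
    have h3 : (0:ℝ) < Real.sqrt 3 * ρ := by positivity
    have hdiv : Real.exp (-(a/2)*t) / (a*s) ≤ Real.exp (-t/2) / (Real.sqrt 3 * ρ) :=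
      div_le_div₀ (Real.exp_pos _).le hexple h3 hkey
    calc Real.sqrt (1 + ρ^2) * (Real.exp (-(a/2)*t) / (a*s))
        ≤ (Real.sqrt 2 * ρ) * (Real.exp (-t/2) / (Real.sqrt 3 * ρ)) := by
          apply mul_le_mul hcoer hdiv (by positivity) (by positivity)
      _ = (Real.sqrt 2 / Real.sqrt 3) * Real.exp (-t/2) := by
          field_simp
      _ ≤ 2 * Real.exp (-t/2) := by
          apply mul_le_mul_of_nonneg_right _ (Real.exp_pos _).le
          rw [div_le_iff₀ (by positivity)]
          nlinarith [Real.sq_sqrt (by norm_num : (0:ℝ) ≤ 2),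
            Real.sq_sqrt (by norm_num : (0:ℝ) ≤ 3),
            Real.sqrt_nonneg 2, Real.one_le_sqrt.mpr (by norm_num : (1:ℝ) ≤ 3)]
  constructor
  · rw [norm_div, hden, hexp1]; exact main
  · rw [norm_div, norm_neg, hden, hexp2]; exact main
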